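/- Let b ≥ 2 be an integer and let p ≥ 5 be a prime number. Then there exist nonzero elements λ₁, …, λ_b, μ₁, …, μ_b of the field ℤ_p with p elements such that λ₁ + … + λ_b = 1, μ₁ + … + μ_b = 1, and λ_j · μ_j ≠ 1 for every j ∈ {1, …, b}. -/
import Mathlib

lemma key5 : ∀ m : ZMod 5, ∃ v y z : ZMod 5,
    v ≠ 0 ∧ v ≠ 1 ∧ v ≠ -1 ∧ y ≠ 0 ∧ y ≠ 1 ∧ y ≠ -1 ∧ z ≠ 0 ∧ z ≠ 1 ∧ z ≠ -1 ∧
    v * m + y + z = 1 := by decide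

lemma key (p : ℕ) (hp : p.Prime) (hp5 : 5 ≤ p) (m : ZMod p) :
    ∃ v y z : ZMod p,
      v ≠ 0 ∧ v ≠ 1 ∧ v ≠ -1 ∧ y ≠ 0 ∧ y ≠ 1 ∧ y ≠ -1 ∧ z ≠ 0 ∧ z ≠ 1 ∧ z ≠ -1 ∧
      v * m + y + z = 1 := by
  haveI : Fact p.Prime := ⟨hp⟩
  rcases eq_or_lt_of_le hp5 with h5 | h7
  · subst h5; exact key5 m
  · -- p ≥ 7 (p ≠ 6 since prime)
    have hp7 : 7 ≤ p := by
      rcases Nat.lt_or_ge p 7 with h | h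
      · interval_cases p
        · exact absurd hp (by norm_num)
      · exact h
    refine ⟨2, ?_⟩
    set T : Finset (ZMod p) := {0, 1, -1, 1 - 2 * m, -(2 * m), 2 - 2 * m} with hT
    have hcard : T.card ≤ 6 := by
      refine le_trans (Finset.card_insert_le _ _) ?_
      refine Nat.succ_le_succ ?_
      refine le_trans (Finset.card_insert_le _ _) ?_
      refine Nat.succ_le_succ ?_
      refine le_trans (Finset.card_insert_le _ _) ?_
      refine Nat.succ_le_succ ?_
      refine le_trans (Finset.card_insert_le _ _) ?_
      refine Nat.succ_le_succ ?_
      refine le_trans (Finset.card_insert_le _ _) ?_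
      refine Nat.succ_le_succ ?_
      simp
    have hcardZ : Fintype.card (ZMod p) = p := ZMod.card p
    obtain ⟨y, hy⟩ : ∃ y : ZMod p, y ∉ T := by
      by_contra h
      push_neg at h
      have h1 : (Finset.univ : Finset (ZMod p)).card ≤ T.card :=
        Finset.card_le_card (fun x _ => h x)
      have h2 : p ≤ 6 := by
        calc p = Fintype.card (ZMod p) := hcardZ.symm
        _ = (Finset.univ : Finset (ZMod p)).card := (Finset.card_univ).symm
        _ ≤ T.card := h1
        _ ≤ 6 := hcard
      omega
    simp only [hT, Finset.mem_insert, Finset.mem_singleton, not_or] at hy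
    obtain ⟨hy0, hy1, hym1, ha, hb, hc⟩ := hy
    refine ⟨y, 1 - 2 * m - y, ?_, ?_, ?_, hy0, hy1, hym1, ?_, ?_, ?_, by ring⟩
    · intro h
      have : ((2 : ℕ) : ZMod p) = 0 := by exact_mod_cast h
      rw [ZMod.natCast_eq_zero_iff] at this
      have := Nat.le_of_dvd (by norm_num) this
      omega
    · intro h
      have : ((2 : ℕ) : ZMod p) = ((1 : ℕ) : ZMod p) := by exact_mod_cast h
      have h2 := (ZMod.natCast_eq_natCast_iff' 2 1 p).mp this
      rw [Nat.mod_eq_of_lt (by omega), Nat.mod_eq_of_lt (by omega)] at h2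
      omega
    · intro h
      have h3 : ((3 : ℕ) : ZMod p) = 0 := by push_cast; linear_combination h
      rw [ZMod.natCast_eq_zero_iff] at h3
      have := Nat.le_of_dvd (by norm_num) h3
      omega
    · intro h; exact ha (by linear_combination -h)
    · intro h; exact hb (by linear_combination -h)
    · intro h; exact hc (by linear_combination -h)


/-- Lemma `lem:technical`: for `b ≥ 2` and a prime `p ≥ 5` there exist
nonzero `λ₁,…,λ_b, μ₁,…,μ_b ∈ ℤ_p` with `Σλ_j = Σμ_j = 1` and `λ_j μ_j ≠ 1` for all `j`. -/
theorem stmt_0 (b p : ℕ) (hb : 2 ≤ b) (hp : p.Prime) (hp5 : 5 ≤ p) :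
    ∃ lam mu : Fin b → ZMod p,
      (∀ j, lam j ≠ 0) ∧ (∀ j, mu j ≠ 0) ∧
      (∑ j, lam j) = 1 ∧ (∑ j, mu j) = 1 ∧
      (∀ j, lam j * mu j ≠ 1) := by
  haveI : Fact p.Prime := ⟨hp⟩
  obtain ⟨v, y, z, hv0, hv1, hvm, hy0, hy1, hym, hz0, hz1, hzm, hsum⟩ :=
    key p hp hp5 ((b - 2 : ℕ) : ZMod p)
  set i0 : Fin b := ⟨0, by omega⟩
  set i1 : Fin b := ⟨1, by omega⟩
  have hne : i0 ≠ i1 := by simp [i0, i1, Fin.ext_iff]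
  set lam : Fin b → ZMod p :=
    fun j => v + (if j = i0 then y - v else 0) + (if j = i1 then z - v else 0) with hlam
  have hval : ∀ j, lam j = y ∨ lam j = z ∨ lam j = v := by
    intro j
    simp only [hlam]
    split_ifs with h1 h2
    · exact absurd (h1 ▸ h2) hne
    · left; ring
    · right; left; ring
    · right; right; ring
  have hnz : ∀ j, lam j ≠ 0 := by
    intro j
    rcases hval j with h | h | h <;> rw [h] <;> assumption
  have hS : (∑ j, lam j) = 1 := by
    simp only [hlam, Finset.sum_add_distrib, Finset.sum_const, Finset.card_univ,
      Fintype.card_fin, Finset.sum_ite_eq' Finset.univ, Finset.mem_univ, if_true,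
      nsmul_eq_mul]
    have hcast : ((b - 2 : ℕ) : ZMod p) = (b : ZMod p) - 2 := by
      push_cast [Nat.cast_sub hb]; ring
    rw [hcast] at hsum
    linear_combination hsum
  refine ⟨lam, lam, hnz, hnz, hS, hS, fun j h => ?_⟩
  rcases mul_self_eq_one_iff.mp h with h1 | h1 <;>
    rcases hval j with h2 | h2 | h2 <;> rw [h2] at h1 <;> simp_all
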